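/- Suppose p > 0 and 0 < α < 1 (so that β < 0). Then for every t ≥ 0 the function t ↦ b(t)/l(t)² is differentiable with derivative (d/dt)[b(t)/l(t)²] = ((2(p+q) − β·l(t))/l(t)³)·l′(t), and this derivative is strictly positive; in particular t ↦ b(t)/l(t)² is strictly increasing on [0,∞). -/
import Mathlib


/-- For `p > 0` and `0 < α < 1` (so `β < 0`), the function `t ↦ b(t)/l(t)²` is
differentiable with derivative `((2(p+q) − β·l(t))/l(t)³)·l′(t)`, which is strictly
positive; in particular `t ↦ b(t)/l(t)²` is strictly increasing on `[0,∞)`. -/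
theorem stmt_3 (p q α β : ℝ) (hq : 0 < q) (hp : 0 < p)
    (hα0 : 0 < α) (hα1 : α < 1) (hαβ : 1 / α + 1 / β = 1)
    (l b : ℝ → ℝ)
    (hl : ∀ t : ℝ, l t = p * (1 - 2 * p * q / ((2 * q + p) ^ 2 * Real.exp (2 * q * t) - p ^ 2)))
    (hb : ∀ t : ℝ, b t = -(p + q) + β * l t) :
    (∀ t : ℝ, 0 ≤ t →
      HasDerivAt (fun s => b s / (l s) ^ 2)
        ((2 * (p + q) - β * l t) / (l t) ^ 3 * deriv l t) t ∧
      0 < (2 * (p + q) - β * l t) / (l t) ^ 3 * deriv l t) ∧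
    StrictMonoOn (fun s => b s / (l s) ^ 2) (Set.Ici (0 : ℝ)) := by
  have hβ : β < 0 := by
    have h1 : 1 < 1 / α := one_lt_one_div hα0 hα1
    have h2 : 1 / β < 0 := by linarith
    exact one_div_neg.mp h2
  set D : ℝ → ℝ := fun t => (2 * q + p) ^ 2 * Real.exp (2 * q * t) - p ^ 2 with hDdef
  have hDlt : ∀ t : ℝ, 0 ≤ t → 2 * p * q < D t := by
    intro t ht
    have h1 : (1 : ℝ) ≤ Real.exp (2 * q * t) := Real.one_le_exp (by positivity)
    have h2 : (2 * q + p) ^ 2 * 1 ≤ (2 * q + p) ^ 2 * Real.exp (2 * q * t) :=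
      mul_le_mul_of_nonneg_left h1 (by positivity)
    simp only [hDdef]
    nlinarith
  have hD0 : ∀ t : ℝ, 0 ≤ t → 0 < D t := fun t ht =>
    lt_trans (by positivity) (hDlt t ht)
  have hlf : l = fun t => p * (1 - 2 * p * q / D t) := funext hl
  have hbf : b = fun t => -(p + q) + β * l t := funext hb
  have hlpos : ∀ t : ℝ, 0 ≤ t → 0 < l t := by
    intro t ht
    rw [hl t]
    have h1 : 2 * p * q / D t < 1 := (div_lt_one (hD0 t ht)).mpr (hDlt t ht)
    have h2 : (0:ℝ) ≤ 2 * p * q / D t := div_nonneg (by positivity) (hD0 t ht).le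
    have : D t = (2 * q + p) ^ 2 * Real.exp (2 * q * t) - p ^ 2 := rfl
    rw [← this]
    nlinarith
  have key : ∀ t : ℝ, 0 ≤ t →
      HasDerivAt l (4 * p ^ 2 * q ^ 2 * (2 * q + p) ^ 2 * Real.exp (2 * q * t) / (D t) ^ 2) t := by
    intro t ht
    have hid : HasDerivAt (fun s : ℝ => 2 * q * s) (2 * q) t := by
      simpa using (hasDerivAt_id t).const_mul (2 * q)
    have hexp : HasDerivAt (fun s : ℝ => Real.exp (2 * q * s))
        (Real.exp (2 * q * t) * (2 * q)) t := hid.exp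
    have hDt : HasDerivAt D ((2 * q + p) ^ 2 * (Real.exp (2 * q * t) * (2 * q))) t := by
      simpa [hDdef] using (hexp.const_mul ((2 * q + p) ^ 2)).sub_const (p ^ 2)
    have hdiv : HasDerivAt (fun s => 2 * p * q / D s)
        ((0 * D t - 2 * p * q * ((2 * q + p) ^ 2 * (Real.exp (2 * q * t) * (2 * q)))) / (D t) ^ 2)
        t := (hasDerivAt_const t (2 * p * q)).div hDt (ne_of_gt (hD0 t ht))
    have hlt : HasDerivAt l
        (p * (0 - (0 * D t - 2 * p * q * ((2 * q + p) ^ 2 * (Real.exp (2 * q * t) * (2 * q)))) / (D t) ^ 2))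
        t := by
      rw [hlf]
      exact (((hasDerivAt_const t (1:ℝ)).sub hdiv).const_mul p)
    convert hlt using 1
    have hne : D t ≠ 0 := ne_of_gt (hD0 t ht)
    field_simp
    ring
  have main : ∀ t : ℝ, 0 ≤ t →
      HasDerivAt (fun s => b s / (l s) ^ 2)
        ((2 * (p + q) - β * l t) / (l t) ^ 3 * deriv l t) t ∧
      0 < (2 * (p + q) - β * l t) / (l t) ^ 3 * deriv l t := by
    intro t ht
    set E := 4 * p ^ 2 * q ^ 2 * (2 * q + p) ^ 2 * Real.exp (2 * q * t) / (D t) ^ 2 with hE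
    have hlt := key t ht
    have hEpos : 0 < E := by
      rw [hE]
      exact div_pos (by positivity) (pow_pos (hD0 t ht) 2)
    have hlpt := hlpos t ht
    have hlne : l t ≠ 0 := ne_of_gt hlpt
    have hbt : HasDerivAt b (β * E) t := by
      rw [hbf]
      exact (hlt.const_mul β).const_add _
    have hl2 : HasDerivAt (fun s => (l s) ^ 2) ((2:ℕ) * l t ^ 1 * E) t := hlt.pow 2
    have hdiv : HasDerivAt (fun s => b s / (l s) ^ 2)
        ((β * E * (l t) ^ 2 - b t * ((2:ℕ) * l t ^ 1 * E)) / ((l t) ^ 2) ^ 2) t :=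
      hbt.div hl2 (by positivity)
    have hderiv : deriv l t = E := hlt.deriv
    constructor
    · rw [hderiv]
      convert hdiv using 1
      rw [hb t]
      field_simp
      ring
    · rw [hderiv]
      have h1 : 0 < 2 * (p + q) - β * l t := by nlinarith
      exact mul_pos (div_pos h1 (pow_pos hlpt 3)) hEpos
  refine ⟨main, ?_⟩
  have hconv : Convex ℝ (Set.Ici (0:ℝ)) := convex_Ici 0
  refine strictMonoOn_of_deriv_pos hconv ?_ ?_
  · intro x hx
    exact ((main x hx).1.differentiableAt.continuousAt).continuousWithinAt
  · intro x hx
    rw [interior_Ici] at hx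
    have h := main x (le_of_lt hx)
    rw [h.1.deriv]
    exact h.2
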